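/- Let E be a vector lattice with e ∈ E⁺ such that f^[2] := sup_{λ∈ℝ}(2λf − λ²e) exists for all f ∈ E. Then for all f, g ∈ E⁺ one has f^[2] + g^[2] ≤ (f+g)^[2]. -/
import Mathlib


/-- In a square closed positively pointed vector lattice,
`f^[2] + g^[2] ≤ (f+g)^[2]` for positive `f, g`. -/
theorem square_superadditive {E : Type*} [Lattice E] [AddCommGroup E]
    [Module ℝ E] [CovariantClass E E (· + ·) (· ≤ ·)] [PosSMulMono ℝ E]
    (e : E) (he : 0 ≤ e) (sq : E → E)
    (hsq : ∀ f : E, IsLUB (Set.range fun l : ℝ => (2 * l) • f - (l ^ 2) • e) (sq f))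
    (f g : E) (hf : 0 ≤ f) (hg : 0 ≤ g) :
    sq f + sq g ≤ sq (f + g) := by
  have key : ∀ l m : ℝ,
      ((2 * l) • f - (l ^ 2) • e) + ((2 * m) • g - (m ^ 2) • e) ≤ sq (f + g) := by
    intro l m
    set n := max l m with hn
    have h1 : (2 * l) • f ≤ (2 * n) • f := by
      rw [← sub_nonneg, ← sub_smul]
      exact smul_nonneg (by nlinarith [le_max_left l m]) hf
    have h2 : (2 * m) • g ≤ (2 * n) • g := by
      rw [← sub_nonneg, ← sub_smul]
      exact smul_nonneg (by nlinarith [le_max_right l m]) hg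
    have h3 : (n ^ 2) • e ≤ (l ^ 2) • e + (m ^ 2) • e := by
      rw [← add_smul, ← sub_nonneg, ← sub_smul]
      refine smul_nonneg ?_ he
      rcases max_cases l m with ⟨h, _⟩ | ⟨h, _⟩ <;> rw [hn, h] <;> nlinarith [sq_nonneg l, sq_nonneg m]
    have step : ((2 * l) • f - (l ^ 2) • e) + ((2 * m) • g - (m ^ 2) • e)
        ≤ (2 * n) • (f + g) - (n ^ 2) • e := by
      rw [smul_add, sub_add_sub_comm]
      exact sub_le_sub (add_le_add h1 h2) h3
    exact step.trans ((hsq (f + g)).1 ⟨n, rfl⟩)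
  have h1 : sq f ≤ sq (f + g) - sq g := by
    refine (hsq f).2 ?_
    rintro _ ⟨l, rfl⟩
    rw [le_sub_iff_add_le, ← le_sub_iff_add_le']
    refine (hsq g).2 ?_
    rintro _ ⟨m, rfl⟩
    rw [le_sub_iff_add_le']
    exact key l m
  exact le_sub_iff_add_le.mp h1
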